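/- Let G be a group, H a subgroup of G, x ∈ G, P ∈ InvLO_x^H(G) ∩ Cof_x^H(G), and let ρ̄ = ρ̄_{x,P}^H : H → ℝ be the stable map. If h₁, …, h_k ∈ H satisfy ρ̄(h₁h₂⋯h_k) = 0, then |ρ̄(h₁) + ρ̄(h₂) + ⋯ + ρ̄(h_k)| ≤ k − 1. -/

import Mathlib

open Filter Topology

/-- A subset `P ⊆ G` is the positive cone of a left ordering: `P·P ⊆ P` and
`G = P ⊔ P⁻¹ ⊔ {1}`. -/
def IsPosCone {G : Type*} [Group G] (P : Set G) : Prop :=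
  (∀ a ∈ P, ∀ b ∈ P, a * b ∈ P) ∧
  (∀ g : G, g ∈ P ∨ g⁻¹ ∈ P ∨ g = 1) ∧
  (∀ g : G, g ∈ P → g⁻¹ ∉ P) ∧
  (1 : G) ∉ P

/-- The left-invariant order determined by a positive cone: `a <_P b` iff `a⁻¹ b ∈ P`. -/
def ltC {G : Type*} [Group G] (P : Set G) (a b : G) : Prop := a⁻¹ * b ∈ P

/-- The non-strict order determined by a positive cone. -/
def leC {G : Type*} [Group G] (P : Set G) (a b : G) : Prop := ltC P a b ∨ a = b

/-- `P ∈ InvLO_x^H(G)`: right multiplication by `x` preserves `<_P` on the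
subgroup generated by `H ∪ {x}`. -/
def InvOn {G : Type*} [Group G] (P : Set G) (H : Subgroup G) (x : G) : Prop :=
  ∀ b ∈ Subgroup.closure ((H : Set G) ∪ {x}),
  ∀ b' ∈ Subgroup.closure ((H : Set G) ∪ {x}),
  ltC P b b' → ltC P (b * x) (b' * x)

/-- `P ∈ Cof_x^H(G)`: `x` is cofinal to `H` with respect to `<_P`. -/
def CofTo {G : Type*} [Group G] (P : Set G) (H : Subgroup G) (x : G) : Prop :=
  ∀ h ∈ H, ∃ N : ℕ, 1 ≤ N ∧ ltC P (x ^ (-(N : ℤ))) h ∧ ltC P h (x ^ (N : ℤ))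

/-- `ρ` is the quasi morphism `ρ_{x,P}^H`: if `1 <_P x` then
`x^(ρ h) ≤_P h <_P x^(ρ h + 1)`, and if `x <_P 1` then `x^(-ρ h - 1) <_P h ≤_P x^(-ρ h)`,
for all `h ∈ H`. -/
def RhoChar {G : Type*} [Group G] (P : Set G) (H : Subgroup G) (x : G) (ρ : G → ℤ) : Prop :=
  ∀ h ∈ H,
    (ltC P 1 x → leC P (x ^ ρ h) h ∧ ltC P h (x ^ (ρ h + 1))) ∧
    (ltC P x 1 → ltC P (x ^ (-(ρ h) - 1)) h ∧ leC P h (x ^ (-(ρ h))))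

section AuxLO

namespace LOAux

variable {G : Type*} [Group G] {P : Set G} {x : G}

theorem ltC_def (P : Set G) (a b : G) : ltC P a b ↔ a⁻¹ * b ∈ P := Iff.rfl

theorem ltc_trans (hP : IsPosCone P) {a b c : G} (h1 : ltC P a b) (h2 : ltC P b c) :
    ltC P a c := by
  have h := hP.1 _ h1 _ h2
  have e : a⁻¹ * b * (b⁻¹ * c) = a⁻¹ * c := by group
  rwa [e] at h

theorem ltc_irrefl (hP : IsPosCone P) (a : G) : ¬ ltC P a a := by
  simp [ltC_def, hP.2.2.2]

theorem ltc_asymm (hP : IsPosCone P) {a b : G} (h1 : ltC P a b) (h2 : ltC P b a) : False :=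
  ltc_irrefl hP a (ltc_trans hP h1 h2)

theorem tricho (hP : IsPosCone P) (a b : G) : ltC P a b ∨ a = b ∨ ltC P b a := by
  rcases hP.2.1 (a⁻¹ * b) with h | h | h
  · exact Or.inl h
  · right; right
    rw [ltC_def, show b⁻¹ * a = (a⁻¹ * b)⁻¹ by group]
    exact h
  · right; left
    have := inv_mul_eq_one.1 h
    exact this.symm ▸ rfl

theorem le_lt_trans (hP : IsPosCone P) {a b c : G} (h1 : leC P a b) (h2 : ltC P b c) :
    ltC P a c := by
  rcases h1 with h1 | rfl
  · exact ltc_trans hP h1 h2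
  · exact h2

theorem lt_le_trans (hP : IsPosCone P) {a b c : G} (h1 : ltC P a b) (h2 : leC P b c) :
    ltC P a c := by
  rcases h2 with h2 | rfl
  · exact ltc_trans hP h1 h2
  · exact h1

theorem lec_trans (hP : IsPosCone P) {a b c : G} (h1 : leC P a b) (h2 : leC P b c) :
    leC P a c := by
  rcases h1 with h1 | rfl
  · exact Or.inl (lt_le_trans hP h1 h2)
  · exact h2

theorem ltc_mul_left (hP : IsPosCone P) (c : G) {a b : G} (h : ltC P a b) :
    ltC P (c * a) (c * b) := by
  rwa [ltC_def, show (c * a)⁻¹ * (c * b) = a⁻¹ * b by group]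

theorem lec_mul_left (hP : IsPosCone P) (c : G) {a b : G} (h : leC P a b) :
    leC P (c * a) (c * b) := by
  rcases h with h | rfl
  · exact Or.inl (ltc_mul_left hP c h)
  · exact Or.inr rfl

theorem xpow_pos (hP : IsPosCone P) (hx : x ∈ P) : ∀ n : ℤ, 0 < n → x ^ n ∈ P := by
  have hnat : ∀ m : ℕ, x ^ (m + 1) ∈ P := by
    intro m
    induction m with
    | zero => simpa using hx
    | succ m ih => rw [pow_succ]; exact hP.1 _ ih _ hx
  intro n hn
  obtain ⟨m, rfl⟩ : ∃ m : ℕ, n = ((m + 1 : ℕ) : ℤ) := ⟨(n - 1).toNat, by omega⟩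
  rw [zpow_natCast]
  exact hnat m

theorem xpow_lt (hP : IsPosCone P) (hx : x ∈ P) {m n : ℤ} (h : m < n) :
    ltC P (x ^ m) (x ^ n) := by
  rw [ltC_def, ← zpow_neg, ← zpow_add]
  exact xpow_pos hP hx _ (by omega)

theorem xpow_lt_iff (hP : IsPosCone P) (hx : x ∈ P) {m n : ℤ} :
    ltC P (x ^ m) (x ^ n) ↔ m < n := by
  constructor
  · intro hlt
    by_contra hc
    push_neg at hc
    rcases eq_or_lt_of_le hc with he | hl
    · rw [he] at hlt; exact ltc_irrefl hP _ hlt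
    · exact ltc_asymm hP hlt (xpow_lt hP hx hl)
  · exact xpow_lt hP hx

theorem le_lt_exp (hP : IsPosCone P) (hx : x ∈ P) {a b : ℤ} {c : G}
    (h1 : leC P (x ^ a) c) (h2 : ltC P c (x ^ b)) : a < b :=
  (xpow_lt_iff hP hx).1 (le_lt_trans hP h1 h2)

section Conj

variable (K : Subgroup G)

theorem conj_rev (hP : IsPosCone P) (hxK : x ∈ K)
    (hc1 : ∀ c ∈ K, c ∈ P → x⁻¹ * c * x ∈ P) :
    ∀ c ∈ K, c ∈ P → x * c * x⁻¹ ∈ P := by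
  intro c hcK hcP
  rcases hP.2.1 (x * c * x⁻¹) with h | h | h
  · exact h
  · exfalso
    have hm : x * c⁻¹ * x⁻¹ ∈ P := by
      rwa [show (x * c * x⁻¹)⁻¹ = x * c⁻¹ * x⁻¹ by group] at h
    have hmK : x * c⁻¹ * x⁻¹ ∈ K :=
      K.mul_mem (K.mul_mem hxK (K.inv_mem hcK)) (K.inv_mem hxK)
    have h2 := hc1 _ hmK hm
    rw [show x⁻¹ * (x * c⁻¹ * x⁻¹) * x = c⁻¹ by group] at h2
    exact hP.2.2.1 _ hcP h2
  · exfalso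
    have hc : c = 1 := by
      have e : c = x⁻¹ * (x * c * x⁻¹) * x := by group
      rw [h] at e; simpa using e
    rw [hc] at hcP
    exact hP.2.2.2 hcP

theorem conj_zpow (hP : IsPosCone P) (hxK : x ∈ K)
    (hc1 : ∀ c ∈ K, c ∈ P → x⁻¹ * c * x ∈ P) :
    ∀ n : ℤ, ∀ c ∈ K, c ∈ P → x ^ (-n) * c * x ^ n ∈ P := by
  intro n
  induction n using Int.induction_on with
  | zero => intro c _ hcP; simpa using hcP
  | succ m ih =>
    intro c hcK hcP
    have h1 := ih c hcK hcP
    have h1K : x ^ (-(m : ℤ)) * c * x ^ (m : ℤ) ∈ K :=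
      K.mul_mem (K.mul_mem (K.zpow_mem hxK _) hcK) (K.zpow_mem hxK _)
    have h2 := hc1 _ h1K h1
    rwa [show x⁻¹ * (x ^ (-(m : ℤ)) * c * x ^ (m : ℤ)) * x
        = x ^ (-((m : ℤ) + 1)) * c * x ^ ((m : ℤ) + 1) by group] at h2
  | pred m ih =>
    intro c hcK hcP
    have h1 := ih c hcK hcP
    have h1K : x ^ (-(-(m : ℤ))) * c * x ^ (-(m : ℤ)) ∈ K :=
      K.mul_mem (K.mul_mem (K.zpow_mem hxK _) hcK) (K.zpow_mem hxK _)
    have h2 := conj_rev K hP hxK hc1 _ h1K h1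
    rwa [show x * (x ^ (-(-(m : ℤ))) * c * x ^ (-(m : ℤ))) * x⁻¹
        = x ^ (-(-(m : ℤ) - 1)) * c * x ^ (-(m : ℤ) - 1) by group] at h2

theorem rmul_lt (hP : IsPosCone P) (hxK : x ∈ K)
    (hc1 : ∀ c ∈ K, c ∈ P → x⁻¹ * c * x ∈ P)
    {c d : G} (hc : c ∈ K) (hd : d ∈ K) (h : ltC P c d) (n : ℤ) :
    ltC P (c * x ^ n) (d * x ^ n) := by
  rw [ltC_def] at h ⊢
  rw [show (c * x ^ n)⁻¹ * (d * x ^ n) = x ^ (-n) * (c⁻¹ * d) * x ^ n by group]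
  exact conj_zpow K hP hxK hc1 n _ (K.mul_mem (K.inv_mem hc) hd) h

theorem rmul_le (hP : IsPosCone P) (hxK : x ∈ K)
    (hc1 : ∀ c ∈ K, c ∈ P → x⁻¹ * c * x ∈ P)
    {c d : G} (hc : c ∈ K) (hd : d ∈ K) (h : leC P c d) (n : ℤ) :
    leC P (c * x ^ n) (d * x ^ n) := by
  rcases h with h | rfl
  · exact Or.inl (rmul_lt K hP hxK hc1 hc hd h n)
  · exact Or.inr rfl

end Conj

section Sigma

variable (K : Subgroup G) (σ : G → ℤ)

theorem sigma_ge (hP : IsPosCone P) (hx : x ∈ P)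
    (hσ : ∀ c ∈ K, leC P (x ^ σ c) c ∧ ltC P c (x ^ (σ c + 1)))
    {c : G} (hc : c ∈ K) {m : ℤ} (h : leC P (x ^ m) c) : m ≤ σ c := by
  have := le_lt_exp hP hx h (hσ c hc).2
  omega

theorem sigma_lt (hP : IsPosCone P) (hx : x ∈ P)
    (hσ : ∀ c ∈ K, leC P (x ^ σ c) c ∧ ltC P c (x ^ (σ c + 1)))
    {c : G} (hc : c ∈ K) {m : ℤ} (h : ltC P c (x ^ m)) : σ c < m :=
  le_lt_exp hP hx (hσ c hc).1 h

theorem sigma_one (hP : IsPosCone P) (hx : x ∈ P)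
    (hσ : ∀ c ∈ K, leC P (x ^ σ c) c ∧ ltC P c (x ^ (σ c + 1))) : σ 1 = 0 := by
  have h1 : leC P (x ^ (0 : ℤ)) (1 : G) := Or.inr (by simp)
  have h2 : ltC P (1 : G) (x ^ (1 : ℤ)) := by
    rw [ltC_def]; simpa using hx
  have g1 := sigma_ge K σ hP hx hσ K.one_mem h1
  have g2 := sigma_lt K σ hP hx hσ K.one_mem h2
  omega

theorem sigma_mul_ge (hP : IsPosCone P) (hx : x ∈ P) (hxK : x ∈ K)
    (hc1 : ∀ c ∈ K, c ∈ P → x⁻¹ * c * x ∈ P)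
    (hσ : ∀ c ∈ K, leC P (x ^ σ c) c ∧ ltC P c (x ^ (σ c + 1)))
    {c d : G} (hc : c ∈ K) (hd : d ∈ K) : σ c + σ d ≤ σ (c * d) := by
  apply sigma_ge K σ hP hx hσ (K.mul_mem hc hd)
  have e : x ^ (σ c + σ d) = x ^ σ c * x ^ σ d := zpow_add x _ _
  rw [e]
  have h1 : leC P (x ^ σ c * x ^ σ d) (c * x ^ σ d) :=
    rmul_le K hP hxK hc1 (K.zpow_mem hxK _) hc (hσ c hc).1 _
  have h2 : leC P (c * x ^ σ d) (c * d) := lec_mul_left hP c (hσ d hd).1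
  exact lec_trans hP h1 h2

theorem sigma_mul_le (hP : IsPosCone P) (hx : x ∈ P) (hxK : x ∈ K)
    (hc1 : ∀ c ∈ K, c ∈ P → x⁻¹ * c * x ∈ P)
    (hσ : ∀ c ∈ K, leC P (x ^ σ c) c ∧ ltC P c (x ^ (σ c + 1)))
    {c d : G} (hc : c ∈ K) (hd : d ∈ K) : σ (c * d) ≤ σ c + σ d + 1 := by
  have key : ltC P (c * d) (x ^ (σ c + σ d + 2)) := by
    have h1 : ltC P (c * d) (c * x ^ (σ d + 1)) := ltc_mul_left hP c (hσ d hd).2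
    have h2 : ltC P (c * x ^ (σ d + 1)) (x ^ (σ c + 1) * x ^ (σ d + 1)) :=
      rmul_lt K hP hxK hc1 hc (K.zpow_mem hxK _) (hσ c hc).2 _
    have e : x ^ (σ c + 1) * x ^ (σ d + 1) = x ^ (σ c + σ d + 2) := by
      rw [← zpow_add]; ring_nf
    rw [e] at h2
    exact ltc_trans hP h1 h2
  have := sigma_lt K σ hP hx hσ (K.mul_mem hc hd) key
  omega

theorem sigma_pow_ge (hP : IsPosCone P) (hx : x ∈ P) (hxK : x ∈ K)
    (hc1 : ∀ c ∈ K, c ∈ P → x⁻¹ * c * x ∈ P)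
    (hσ : ∀ c ∈ K, leC P (x ^ σ c) c ∧ ltC P c (x ^ (σ c + 1)))
    {c : G} (hc : c ∈ K) : ∀ n : ℕ, (n : ℤ) * σ c ≤ σ (c ^ n) := by
  intro n
  induction n with
  | zero => simp [sigma_one K σ hP hx hσ]
  | succ n ih =>
    have h1 := sigma_mul_ge K σ hP hx hxK hc1 hσ (K.pow_mem hc n) hc
    rw [← pow_succ] at h1
    push_cast
    linarith

theorem sigma_pow_le (hP : IsPosCone P) (hx : x ∈ P) (hxK : x ∈ K)
    (hc1 : ∀ c ∈ K, c ∈ P → x⁻¹ * c * x ∈ P)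
    (hσ : ∀ c ∈ K, leC P (x ^ σ c) c ∧ ltC P c (x ^ (σ c + 1)))
    {c : G} (hc : c ∈ K) : ∀ n : ℕ, 1 ≤ n → σ (c ^ n) ≤ (n : ℤ) * σ c + (n : ℤ) - 1 := by
  intro n hn
  induction n, hn using Nat.le_induction with
  | base => simp [pow_one]
  | succ n hn ih =>
    have h1 := sigma_mul_le K σ hP hx hxK hc1 hσ (K.pow_mem hc n) hc
    rw [← pow_succ] at h1
    push_cast
    linarith

end Sigma

end LOAux

end AuxLO

section Analytic

variable {G : Type*} [Group G] {P : Set G} {x : G}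
variable (K : Subgroup G) (σ : G → ℤ) (σb : G → ℝ)

open LOAux

theorem sb_lb (hP : IsPosCone P) (hx : x ∈ P) (hxK : x ∈ K)
    (hc1 : ∀ c ∈ K, c ∈ P → x⁻¹ * c * x ∈ P)
    (hσ : ∀ c ∈ K, leC P (x ^ σ c) c ∧ ltC P c (x ^ (σ c + 1)))
    (hσb : ∀ c ∈ K, Filter.Tendsto (fun n : ℕ => (σ (c ^ n) : ℝ) / n) Filter.atTop (nhds (σb c)))
    {c : G} (hc : c ∈ K) : (σ c : ℝ) ≤ σb c := by
  refine ge_of_tendsto (hσb c hc) ?_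
  filter_upwards [Filter.eventually_ge_atTop 1] with n hn
  have hn0 : (0 : ℝ) < n := by exact_mod_cast hn
  rw [le_div_iff₀ hn0]
  have h := sigma_pow_ge K σ hP hx hxK hc1 hσ hc n
  have h' : ((n : ℤ) * σ c : ℝ) ≤ ((σ (c ^ n) : ℤ) : ℝ) := by exact_mod_cast h
  push_cast at h' ⊢
  linarith

theorem sb_ub (hP : IsPosCone P) (hx : x ∈ P) (hxK : x ∈ K)
    (hc1 : ∀ c ∈ K, c ∈ P → x⁻¹ * c * x ∈ P)
    (hσ : ∀ c ∈ K, leC P (x ^ σ c) c ∧ ltC P c (x ^ (σ c + 1)))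
    (hσb : ∀ c ∈ K, Filter.Tendsto (fun n : ℕ => (σ (c ^ n) : ℝ) / n) Filter.atTop (nhds (σb c)))
    {c : G} (hc : c ∈ K) : σb c ≤ (σ c : ℝ) + 1 := by
  refine le_of_tendsto (hσb c hc) ?_
  filter_upwards [Filter.eventually_ge_atTop 1] with n hn
  have hn0 : (0 : ℝ) < n := by exact_mod_cast hn
  rw [div_le_iff₀ hn0]
  have h := sigma_pow_le K σ hP hx hxK hc1 hσ hc n hn
  have h' : ((σ (c ^ n) : ℤ) : ℝ) ≤ ((n : ℤ) * σ c + (n : ℤ) - 1 : ℝ) := by exact_mod_cast h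
  push_cast at h' ⊢
  nlinarith

theorem sb_pow
    (hσb : ∀ c ∈ K, Filter.Tendsto (fun n : ℕ => (σ (c ^ n) : ℝ) / n) Filter.atTop (nhds (σb c)))
    {c : G} (hc : c ∈ K) {m : ℕ} (hm : 1 ≤ m) : σb (c ^ m) = m * σb c := by
  have hmul : Filter.Tendsto (fun n : ℕ => m * n) Filter.atTop Filter.atTop :=
    Filter.tendsto_atTop_mono (fun n => Nat.le_mul_of_pos_left n (by omega)) Filter.tendsto_id
  have h2 : Filter.Tendsto (fun n : ℕ => (σ (c ^ (m * n)) : ℝ) / ((m * n : ℕ) : ℝ))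
      Filter.atTop (nhds (σb c)) := (hσb c hc).comp hmul
  have h3 := h2.const_mul (m : ℝ)
  have h4 : (fun n : ℕ => (m : ℝ) * ((σ (c ^ (m * n)) : ℝ) / ((m * n : ℕ) : ℝ)))
      = fun n : ℕ => (σ ((c ^ m) ^ n) : ℝ) / n := by
    funext n
    rw [← pow_mul]
    have e : ((m * n : ℕ) : ℝ) = (m : ℝ) * n := by push_cast; ring
    rw [e, ← mul_div_assoc, mul_div_mul_left _ _ (show (m : ℝ) ≠ 0 by positivity)]
  rw [h4] at h3
  exact tendsto_nhds_unique (hσb (c ^ m) (K.pow_mem hc m)) h3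

theorem sb_conj (hP : IsPosCone P) (hx : x ∈ P) (hxK : x ∈ K)
    (hc1 : ∀ c ∈ K, c ∈ P → x⁻¹ * c * x ∈ P)
    (hσ : ∀ c ∈ K, leC P (x ^ σ c) c ∧ ltC P c (x ^ (σ c + 1)))
    (hσb : ∀ c ∈ K, Filter.Tendsto (fun n : ℕ => (σ (c ^ n) : ℝ) / n) Filter.atTop (nhds (σb c)))
    {c d : G} (hc : c ∈ K) (hd : d ∈ K) : σb (d * c * d⁻¹) = σb c := by
  set A : ℤ := σ d + σ d⁻¹ with hA
  have hb : ∀ n : ℕ, ((σ (c ^ n) : ℝ) + A ≤ (σ (d * c ^ n * d⁻¹) : ℝ)) ∧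
      ((σ (d * c ^ n * d⁻¹) : ℝ) ≤ (σ (c ^ n) : ℝ) + A + 2) := by
    intro n
    have hcn : c ^ n ∈ K := K.pow_mem hc n
    have hcd : c ^ n * d⁻¹ ∈ K := K.mul_mem hcn (K.inv_mem hd)
    have m1 := sigma_mul_ge K σ hP hx hxK hc1 hσ hd hcd
    have m3 := sigma_mul_le K σ hP hx hxK hc1 hσ hd hcd
    have m2 := sigma_mul_ge K σ hP hx hxK hc1 hσ hcn (K.inv_mem hd)
    have m4 := sigma_mul_le K σ hP hx hxK hc1 hσ hcn (K.inv_mem hd)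
    rw [← mul_assoc] at m1 m3
    have hAr : (A : ℝ) = (σ d : ℝ) + (σ d⁻¹ : ℝ) := by rw [hA]; push_cast; ring
    constructor
    · have : ((σ d + σ (c ^ n * d⁻¹) : ℤ) : ℝ) ≤ (σ (d * c ^ n * d⁻¹) : ℝ) := by exact_mod_cast m1
      have h2 : ((σ (c ^ n) + σ d⁻¹ : ℤ) : ℝ) ≤ (σ (c ^ n * d⁻¹) : ℝ) := by exact_mod_cast m2
      push_cast at this h2 ⊢
      linarith [hAr]
    · have : ((σ (d * c ^ n * d⁻¹) : ℤ) : ℝ) ≤ ((σ d + σ (c ^ n * d⁻¹) + 1 : ℤ) : ℝ) := by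
        exact_mod_cast m3
      have h2 : ((σ (c ^ n * d⁻¹) : ℤ) : ℝ) ≤ ((σ (c ^ n) + σ d⁻¹ + 1 : ℤ) : ℝ) := by
        exact_mod_cast m4
      push_cast at this h2 ⊢
      linarith [hAr]
  have h1 : Filter.Tendsto (fun n : ℕ => (σ (c ^ n) : ℝ) / n + (A : ℝ) / n)
      Filter.atTop (nhds (σb c)) := by
    simpa using (hσb c hc).add (tendsto_const_div_atTop_nhds_zero_nat (A : ℝ))
  have h2 : Filter.Tendsto (fun n : ℕ => (σ (c ^ n) : ℝ) / n + ((A : ℝ) + 2) / n)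
      Filter.atTop (nhds (σb c)) := by
    simpa using (hσb c hc).add (tendsto_const_div_atTop_nhds_zero_nat ((A : ℝ) + 2))
  have h3 : Filter.Tendsto (fun n : ℕ => (σ (d * c ^ n * d⁻¹) : ℝ) / n)
      Filter.atTop (nhds (σb c)) := by
    refine tendsto_of_tendsto_of_tendsto_of_le_of_le' h1 h2 ?_ ?_
    · filter_upwards [Filter.eventually_ge_atTop 1] with n hn
      have hn0 : (0 : ℝ) < n := by exact_mod_cast hn
      rw [← add_div]
      gcongr
      exact (hb n).1
    · filter_upwards [Filter.eventually_ge_atTop 1] with n hn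
      have hn0 : (0 : ℝ) < n := by exact_mod_cast hn
      rw [← add_div]
      have h5 := (hb n).2
      gcongr
      linarith
  have h4 := hσb (d * c * d⁻¹) (K.mul_mem (K.mul_mem hd hc) (K.inv_mem hd))
  simp only [conj_pow] at h4
  exact tendsto_nhds_unique h4 h3

end Analytic

section Defect

variable {G : Type*} [Group G] {P : Set G} {x : G}
variable (K : Subgroup G) (σ : G → ℤ) (σb : G → ℝ)

open LOAux

theorem sb_defect (hP : IsPosCone P) (hx : x ∈ P) (hxK : x ∈ K)
    (hc1 : ∀ c ∈ K, c ∈ P → x⁻¹ * c * x ∈ P)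
    (hσ : ∀ c ∈ K, leC P (x ^ σ c) c ∧ ltC P c (x ^ (σ c + 1)))
    (hσb : ∀ c ∈ K, Filter.Tendsto (fun n : ℕ => (σ (c ^ n) : ℝ) / n) Filter.atTop (nhds (σb c)))
    {c d : G} (hc : c ∈ K) (hd : d ∈ K) : |σb (c * d) - σb c - σb d| ≤ 1 := by
  set U : ℕ → G := fun n => (c * d) ^ n * (d ^ n)⁻¹ with hU
  have hUK : ∀ n : ℕ, U n ∈ K := fun n =>
    K.mul_mem (K.pow_mem (K.mul_mem hc hd) n) (K.inv_mem (K.pow_mem hd n))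
  have hwK : ∀ n : ℕ, d ^ n * c * (d ^ n)⁻¹ ∈ K := fun n =>
    K.mul_mem (K.mul_mem (K.pow_mem hd n) hc) (K.inv_mem (K.pow_mem hd n))
  have hrec : ∀ n : ℕ, U (n + 1) = U n * (d ^ n * c * (d ^ n)⁻¹) := by
    intro n
    show (c * d) ^ (n + 1) * (d ^ (n + 1))⁻¹
        = (c * d) ^ n * (d ^ n)⁻¹ * (d ^ n * c * (d ^ n)⁻¹)
    rw [pow_succ (c * d), pow_succ d]
    group
  have hwb : ∀ n : ℕ, σb c - 1 ≤ (σ (d ^ n * c * (d ^ n)⁻¹) : ℝ) ∧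
      (σ (d ^ n * c * (d ^ n)⁻¹) : ℝ) ≤ σb c := by
    intro n
    have e := sb_conj K σ σb hP hx hxK hc1 hσ hσb hc (K.pow_mem hd n)
    have l1 := sb_lb K σ σb hP hx hxK hc1 hσ hσb (hwK n)
    have l2 := sb_ub K σ σb hP hx hxK hc1 hσ hσb (hwK n)
    rw [e] at l1 l2
    constructor <;> linarith
  have hUb : ∀ n : ℕ, (n : ℝ) * (σb c - 1) ≤ (σ (U n) : ℝ) ∧
      (σ (U n) : ℝ) ≤ (n : ℝ) * σb c + n := by
    intro n
    induction n with
    | zero =>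
      have e : U 0 = 1 := by show (c * d) ^ 0 * (d ^ 0)⁻¹ = 1; simp
      rw [e, sigma_one K σ hP hx hσ]
      simp
    | succ n ih =>
      have m1 := sigma_mul_ge K σ hP hx hxK hc1 hσ (hUK n) (hwK n)
      have m2 := sigma_mul_le K σ hP hx hxK hc1 hσ (hUK n) (hwK n)
      rw [← hrec n] at m1 m2
      have m1' : (σ (U n) : ℝ) + (σ (d ^ n * c * (d ^ n)⁻¹) : ℝ) ≤ (σ (U (n + 1)) : ℝ) := by
        exact_mod_cast m1
      have m2' : (σ (U (n + 1)) : ℝ) ≤ (σ (U n) : ℝ) + (σ (d ^ n * c * (d ^ n)⁻¹) : ℝ) + 1 := by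
        exact_mod_cast m2
      have w := hwb n
      constructor
      · push_cast
        nlinarith [ih.1, w.1]
      · push_cast
        nlinarith [ih.2, w.2]
  have hdn : ∀ n : ℕ, 1 ≤ n → ((n : ℝ) * σb d - 1 ≤ (σ (d ^ n) : ℝ) ∧
      (σ (d ^ n) : ℝ) ≤ (n : ℝ) * σb d) := by
    intro n hn
    have e := sb_pow K σ σb hσb hd hn
    have l1 := sb_lb K σ σb hP hx hxK hc1 hσ hσb (K.pow_mem hd n)
    have l2 := sb_ub K σ σb hP hx hxK hc1 hσ hσb (K.pow_mem hd n)
    rw [e] at l1 l2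
    constructor <;> linarith
  have hprod : ∀ n : ℕ, (c * d) ^ n = U n * d ^ n := by
    intro n
    show (c * d) ^ n = (c * d) ^ n * (d ^ n)⁻¹ * d ^ n
    rw [inv_mul_cancel_right]
  have hmain : ∀ n : ℕ, 1 ≤ n →
      ((n : ℝ) * (σb c + σb d - 1) - 1 ≤ (σ ((c * d) ^ n) : ℝ) ∧
       (σ ((c * d) ^ n) : ℝ) ≤ (n : ℝ) * (σb c + σb d + 1) + 1) := by
    intro n hn
    have m1 := sigma_mul_ge K σ hP hx hxK hc1 hσ (hUK n) (K.pow_mem hd n)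
    have m2 := sigma_mul_le K σ hP hx hxK hc1 hσ (hUK n) (K.pow_mem hd n)
    rw [← hprod n] at m1 m2
    have m1' : (σ (U n) : ℝ) + (σ (d ^ n) : ℝ) ≤ (σ ((c * d) ^ n) : ℝ) := by exact_mod_cast m1
    have m2' : (σ ((c * d) ^ n) : ℝ) ≤ (σ (U n) : ℝ) + (σ (d ^ n) : ℝ) + 1 := by exact_mod_cast m2
    have u := hUb n
    have v := hdn n hn
    constructor
    · nlinarith [u.1, v.1]
    · nlinarith [u.2, v.2]
  have htend := hσb (c * d) (K.mul_mem hc hd)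
  have hub : σb (c * d) ≤ σb c + σb d + 1 := by
    have hg : Filter.Tendsto (fun n : ℕ => (σb c + σb d + 1) + 1 / (n : ℝ))
        Filter.atTop (nhds (σb c + σb d + 1)) := by
      simpa using tendsto_const_nhds.add (tendsto_one_div_atTop_nhds_zero_nat (𝕜 := ℝ))
    refine le_of_tendsto_of_tendsto htend hg ?_
    filter_upwards [Filter.eventually_ge_atTop 1] with n hn
    have hn0 : (0 : ℝ) < n := by exact_mod_cast hn
    show (σ ((c * d) ^ n) : ℝ) / n ≤ (σb c + σb d + 1) + 1 / (n : ℝ)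
    rw [div_le_iff₀ hn0]
    have e : ((σb c + σb d + 1) + 1 / (n : ℝ)) * n = (n : ℝ) * (σb c + σb d + 1) + 1 := by
      field_simp
    rw [e]
    exact (hmain n hn).2
  have hlb : σb c + σb d - 1 ≤ σb (c * d) := by
    have hg : Filter.Tendsto (fun n : ℕ => (σb c + σb d - 1) - 1 / (n : ℝ))
        Filter.atTop (nhds (σb c + σb d - 1)) := by
      simpa using tendsto_const_nhds.sub (tendsto_one_div_atTop_nhds_zero_nat (𝕜 := ℝ))
    refine le_of_tendsto_of_tendsto hg htend ?_
    filter_upwards [Filter.eventually_ge_atTop 1] with n hn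
    have hn0 : (0 : ℝ) < n := by exact_mod_cast hn
    show (σb c + σb d - 1) - 1 / (n : ℝ) ≤ (σ ((c * d) ^ n) : ℝ) / n
    rw [le_div_iff₀ hn0]
    have e : ((σb c + σb d - 1) - 1 / (n : ℝ)) * n = (n : ℝ) * (σb c + σb d - 1) - 1 := by
      field_simp
    rw [e]
    exact (hmain n hn).1
  rw [abs_le]
  constructor <;> linarith

theorem list_bound (hdef : ∀ c ∈ K, ∀ d ∈ K, |σb (c * d) - σb c - σb d| ≤ 1) :
    ∀ l : List G, (∀ g ∈ l, g ∈ K) → l ≠ [] →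
      |σb l.prod - (l.map σb).sum| ≤ (l.length : ℝ) - 1 := by
  intro l
  induction l with
  | nil => intro _ hne; exact absurd rfl hne
  | cons a t ih =>
    intro hmem _
    rcases t with _ | ⟨b, t'⟩
    · simp
    · have haK : a ∈ K := hmem a (by simp)
      have htK : ∀ g ∈ (b :: t'), g ∈ K := fun g hg => hmem g (by simp [hg])
      have hq : (b :: t').prod ∈ K := list_prod_mem htK
      have h1 := hdef a haK _ hq
      have h2 := ih htK (by simp)
      rw [List.prod_cons, List.map_cons, List.sum_cons]
      have e : σb (a * (b :: t').prod) - (σb a + ((b :: t').map σb).sum)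
          = (σb (a * (b :: t').prod) - σb a - σb ((b :: t').prod))
            + (σb ((b :: t').prod) - ((b :: t').map σb).sum) := by ring
      rw [e]
      refine (abs_add_le _ _).trans ?_
      simp only [List.length_cons, List.length_map] at h2 ⊢
      push_cast at h2 ⊢
      linarith

end Defect

open LOAux in
/-- if `ρ̄(h₁ h₂ ⋯ h_k) = 0` for `h₁, …, h_k ∈ H`, then
`|ρ̄(h₁) + ⋯ + ρ̄(h_k)| ≤ k - 1`. -/
theorem stable_map_sum_bound {G : Type*} [Group G]
    (P : Set G) (hP : IsPosCone P) (H : Subgroup G) (x : G)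
    (hinv : InvOn P H x) (hcof : CofTo P H x)
    (ρ : G → ℤ) (hρ : RhoChar P H x ρ) (ρbar : G → ℝ)
    (hρbar : ∀ h ∈ H,
      Tendsto (fun N : ℕ => (ρ (h ^ N) : ℝ) / N) atTop (𝓝 (ρbar h)))
    (k : ℕ) (hk : 1 ≤ k) (h : Fin k → G) (hh : ∀ i, h i ∈ H)
    (hzero : ρbar (List.ofFn h).prod = 0) :
    |∑ i : Fin k, ρbar (h i)| ≤ (k : ℝ) - 1 := by
  classical
  -- Step 0: x ∈ P
  have hx : x ∈ P := by
    rcases hP.2.1 x with hx | hx' | hx1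
    · exact hx
    · exfalso
      have hlt : ltC P x 1 := by rw [ltC_def]; simpa using hx'
      obtain ⟨h1, h2⟩ := (hρ 1 H.one_mem).2 hlt
      set m := ρ (1 : G) with hmdef
      have key : ∀ a : ℤ, x ^ a = x⁻¹ ^ (-a) := by
        intro a
        rw [inv_zpow, zpow_neg, inv_inv]
      rw [key] at h1
      rw [key] at h2
      rw [show (1 : G) = x⁻¹ ^ (0 : ℤ) by simp] at h1 h2
      have hbd : m + 1 < 0 := by
        have := (xpow_lt_iff (x := x⁻¹) hP hx').1 h1
        omega
      rcases h2 with h2lt | h2eq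
      · have := (xpow_lt_iff (x := x⁻¹) hP hx').1 h2lt
        omega
      · have hlt2 := xpow_lt (x := x⁻¹) hP hx' (show -(-m) < 0 by omega)
        rw [← h2eq] at hlt2
        exact ltc_irrefl hP _ hlt2
    · exfalso
      obtain ⟨N, _, _, hlt⟩ := hcof 1 H.one_mem
      rw [hx1] at hlt
      have : (1 : G) ∈ P := by
        have := hlt
        rwa [ltC_def, one_zpow, inv_one, one_mul] at this
      exact hP.2.2.2 this
  have hx1 : ltC P 1 x := by rw [ltC_def]; simpa using hx
  -- the subgroup C
  set K : Subgroup G := Subgroup.closure ((H : Set G) ∪ {x}) with hK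
  have hxK : x ∈ K := Subgroup.subset_closure (Or.inr rfl)
  have hHK : ∀ g ∈ H, g ∈ K := fun g hg => Subgroup.subset_closure (Or.inl hg)
  -- right-invariance seed
  have hc1 : ∀ c ∈ K, c ∈ P → x⁻¹ * c * x ∈ P := by
    intro c hcK hcP
    have h1 : ltC P 1 c := by rw [ltC_def]; simpa using hcP
    have h2 := hinv 1 K.one_mem c hcK h1
    rwa [ltC_def, show (1 * x)⁻¹ * (c * x) = x⁻¹ * c * x by group] at h2
  -- boundedness subgroup
  have hbdd : ∀ c ∈ K, ∃ N : ℕ, ltC P (x ^ (-(N : ℤ))) c ∧ ltC P c (x ^ (N : ℤ)) := by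
    let B : Subgroup G :=
      { carrier := {c : G | c ∈ K ∧ ∃ N : ℕ, ltC P (x ^ (-(N : ℤ))) c ∧ ltC P c (x ^ (N : ℤ))}
        one_mem' := by
          refine ⟨K.one_mem, 1, ?_, ?_⟩
          · rw [ltC_def]; push_cast; simpa using hx
          · rw [ltC_def]; push_cast; simpa using hx
        mul_mem' := by
          rintro a b ⟨haK, Na, ha1, ha2⟩ ⟨hbK, Nb, hb1, hb2⟩
          refine ⟨K.mul_mem haK hbK, Na + Nb, ?_, ?_⟩
          · have s1 : ltC P (x ^ (-(Na : ℤ)) * x ^ (-(Nb : ℤ))) (a * x ^ (-(Nb : ℤ))) :=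
              rmul_lt K hP hxK hc1 (K.zpow_mem hxK _) haK ha1 _
            have s2 : ltC P (a * x ^ (-(Nb : ℤ))) (a * b) := ltc_mul_left hP a hb1
            have s3 := ltc_trans hP s1 s2
            rwa [← zpow_add, show -(Na : ℤ) + -(Nb : ℤ) = -((Na + Nb : ℕ) : ℤ) by push_cast; ring]
              at s3
          · have s2 : ltC P (a * b) (a * x ^ ((Nb : ℤ))) := ltc_mul_left hP a hb2
            have s1 : ltC P (a * x ^ ((Nb : ℤ))) (x ^ ((Na : ℤ)) * x ^ ((Nb : ℤ))) :=
              rmul_lt K hP hxK hc1 haK (K.zpow_mem hxK _) ha2 _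
            have s3 := ltc_trans hP s2 s1
            rwa [← zpow_add, show (Na : ℤ) + (Nb : ℤ) = ((Na + Nb : ℕ) : ℤ) by push_cast; ring]
              at s3
        inv_mem' := by
          rintro a ⟨haK, N, h1, h2⟩
          refine ⟨K.inv_mem haK, N, ?_, ?_⟩
          · have s1 := rmul_lt K hP hxK hc1 haK (K.zpow_mem hxK ((N : ℤ))) h2 (-(N : ℤ))
            rw [← zpow_add] at s1
            simp only [add_neg_cancel, zpow_zero] at s1
            rw [ltC_def] at s1 ⊢
            rwa [show (x ^ (-(N : ℤ)))⁻¹ * a⁻¹ = (a * x ^ (-(N : ℤ)))⁻¹ * 1 by group]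
          · have s1 := rmul_lt K hP hxK hc1 (K.zpow_mem hxK (-(N : ℤ))) haK h1 ((N : ℤ))
            rw [← zpow_add] at s1
            simp only [neg_add_cancel, zpow_zero] at s1
            rw [ltC_def] at s1 ⊢
            rwa [show a⁻¹⁻¹ * x ^ ((N : ℤ)) = 1⁻¹ * (a * x ^ ((N : ℤ))) by group] }
    have hKB : K ≤ B := by
      rw [hK]
      refine (Subgroup.closure_le B).2 ?_
      rintro g (hgH | hgx)
      · obtain ⟨N, _, hg1, hg2⟩ := hcof g hgH
        exact ⟨hHK g hgH, N, hg1, hg2⟩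
      · rcases hgx with rfl
        refine ⟨hxK, 2, ?_, ?_⟩
        · have := xpow_lt hP hx (show -((2 : ℕ) : ℤ) < 1 by omega)
          rwa [zpow_one] at this
        · have := xpow_lt hP hx (show (1 : ℤ) < ((2 : ℕ) : ℤ) by omega)
          rwa [zpow_one] at this
    exact fun c hc => (hKB hc).2
  -- the floor function σ
  have hex : ∀ c : G, ∃ n : ℤ, c ∈ K → (leC P (x ^ n) c ∧ ltC P c (x ^ (n + 1))) := by
    intro c
    by_cases hc : c ∈ K
    · obtain ⟨N, hb1, hb2⟩ := hbdd c hc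
      obtain ⟨n, hn, hmax⟩ := Int.exists_greatest_of_bdd
        (P := fun z : ℤ => leC P (x ^ z) c)
        ⟨(N : ℤ), fun z hz => le_of_lt (le_lt_exp hP hx hz hb2)⟩
        ⟨-(N : ℤ), Or.inl hb1⟩
      refine ⟨n, fun _ => ⟨hn, ?_⟩⟩
      rcases tricho hP c (x ^ (n + 1)) with hlt | heq | hgt
      · exact hlt
      · exfalso; have := hmax (n + 1) (Or.inr heq.symm); omega
      · exfalso; have := hmax (n + 1) (Or.inl hgt); omega
    · exact ⟨0, fun hco => absurd hco hc⟩
  choose σ hσ' using hex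
  have hσ : ∀ c ∈ K, leC P (x ^ σ c) c ∧ ltC P c (x ^ (σ c + 1)) := fun c hc => hσ' c hc
  -- Fekete limits
  have hexL : ∀ c : G, ∃ L : ℝ, c ∈ K →
      Filter.Tendsto (fun n : ℕ => (σ (c ^ n) : ℝ) / n) Filter.atTop (nhds L) := by
    intro c
    by_cases hc : c ∈ K
    · have hsub : Subadditive (fun n : ℕ => (σ (c ^ n) : ℝ) + 1) := by
        intro m n
        have hm := sigma_mul_le K σ hP hx hxK hc1 hσ (K.pow_mem hc m) (K.pow_mem hc n)
        rw [← pow_add] at hm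
        have h2 : (σ (c ^ (m + n)) : ℝ) ≤ (σ (c ^ m) : ℝ) + (σ (c ^ n) : ℝ) + 1 := by
          exact_mod_cast hm
        show (σ (c ^ (m + n)) : ℝ) + 1 ≤ ((σ (c ^ m) : ℝ) + 1) + ((σ (c ^ n) : ℝ) + 1)
        linarith
      have hbddB : BddBelow (Set.range fun n : ℕ => ((σ (c ^ n) : ℝ) + 1) / n) := by
        refine ⟨min (σ c : ℝ) 0, ?_⟩
        rintro r ⟨n, rfl⟩
        rcases Nat.eq_zero_or_pos n with rfl | hn
        · simp
        · have hn0 : (0 : ℝ) < n := by exact_mod_cast hn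
          have hle := sigma_pow_ge K σ hP hx hxK hc1 hσ hc n
          have h' : ((n : ℤ) * σ c : ℝ) ≤ ((σ (c ^ n) : ℤ) : ℝ) := by exact_mod_cast hle
          push_cast at h'
          have : (σ c : ℝ) ≤ ((σ (c ^ n) : ℝ) + 1) / n := by
            rw [le_div_iff₀ hn0]; linarith
          exact le_trans (min_le_left _ _) this
      refine ⟨hsub.lim, fun _ => ?_⟩
      have ht := hsub.tendsto_lim hbddB
      have h2 : Filter.Tendsto (fun n : ℕ => ((σ (c ^ n) : ℝ) + 1) / n - 1 / n)
          Filter.atTop (nhds hsub.lim) := by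
        simpa using ht.sub tendsto_one_div_atTop_nhds_zero_nat
      refine h2.congr ?_
      intro n
      rw [add_div]
      ring
    · exact ⟨0, fun hco => absurd hco hc⟩
  choose σb hσb' using hexL
  have hσb : ∀ c ∈ K, Filter.Tendsto (fun n : ℕ => (σ (c ^ n) : ℝ) / n)
      Filter.atTop (nhds (σb c)) := fun c hc => hσb' c hc
  -- σ agrees with ρ on H, σb with ρbar
  have hagree : ∀ g ∈ H, σb g = ρbar g := by
    intro g hg
    have hgK : g ∈ K := hHK g hg
    have heq : ∀ n : ℕ, σ (g ^ n) = ρ (g ^ n) := by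
      intro n
      have hgn : g ^ n ∈ H := pow_mem hg n
      have hch := (hρ (g ^ n) hgn).1 hx1
      have a1 := sigma_ge K σ hP hx hσ (hHK _ hgn) hch.1
      have a2 := sigma_lt K σ hP hx hσ (hHK _ hgn) hch.2
      omega
    refine tendsto_nhds_unique (hσb g hgK) (Filter.Tendsto.congr (fun n => ?_) (hρbar g hg))
    show (ρ (g ^ n) : ℝ) / n = (σ (g ^ n) : ℝ) / n
    rw [heq n]
  -- conclusion
  have hdef : ∀ c ∈ K, ∀ d ∈ K, |σb (c * d) - σb c - σb d| ≤ 1 :=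
    fun c hc d hd => sb_defect K σ σb hP hx hxK hc1 hσ hσb hc hd
  have hlK : ∀ g ∈ List.ofFn h, g ∈ K := by
    intro g hg
    rw [List.mem_ofFn] at hg
    obtain ⟨i, rfl⟩ := hg
    exact hHK _ (hh i)
  have hlH : ∀ g ∈ List.ofFn h, g ∈ H := by
    intro g hg
    rw [List.mem_ofFn] at hg
    obtain ⟨i, rfl⟩ := hg
    exact hh i
  have hlne : List.ofFn h ≠ [] := by
    intro hnil
    have h1 : (List.ofFn h).length = k := List.length_ofFn (f := h)
    rw [hnil] at h1
    simp at h1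
    omega
  have hmain := list_bound K σb hdef (List.ofFn h) hlK hlne
  have hprodH : (List.ofFn h).prod ∈ H := list_prod_mem hlH
  have hσbprod : σb (List.ofFn h).prod = 0 := by rw [hagree _ hprodH]; exact hzero
  have hsum : ((List.ofFn h).map σb).sum = ∑ i : Fin k, ρbar (h i) := by
    rw [List.map_ofFn, List.sum_ofFn]
    refine Finset.sum_congr rfl (fun i _ => ?_)
    exact hagree _ (hh i)
  rw [hσbprod, hsum, List.length_ofFn, zero_sub, abs_neg] at hmain
  exact hmain
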